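/- Let D and a be bounded operators on a complex Hilbert space H with D self-adjoint, and let g : ℝ → ℂ be integrable with ∫_ℝ |t|·|g(t)| dt < ∞. Let Φ = ∫_ℝ g(t) e^{itD} dt (a Bochner integral in B(H), which exists since ‖g(t)e^{itD}‖ = |g(t)|). Then ‖[Φ, a]‖ ≤ (∫_ℝ |t|·|g(t)| dt) · ‖[D,a]‖. -/

import Mathlib

set_option linter.unusedSectionVars false
set_option maxHeartbeats 1000000
set_option synthInstance.maxHeartbeats 400000

open NormedSpace MeasureTheory

section Aux

variable {H : Type*} [NormedAddCommGroup H] [InnerProductSpace ℂ H] [CompleteSpace H]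

private lemma aux_smul_eq (D : H →L[ℂ] H) (t : ℝ) :
    ((t : ℂ) * Complex.I) • D = t • (Complex.I • D) := by
  rw [← smul_smul, Complex.coe_smul]

private lemma aux_norm_exp_le (D : H →L[ℂ] H) (hD : IsSelfAdjoint D) (t : ℝ) :
    ‖NormedSpace.exp (t • (Complex.I • D))‖ ≤ 1 := by
  have hmem : (t : ℝ) • (Complex.I • D) ∈ skewAdjoint (H →L[ℂ] H) := by
    rw [skewAdjoint.mem_iff]
    rw [star_smul, star_smul, hD.star_eq, star_trivial, Complex.star_def, Complex.conj_I,
      neg_smul, smul_neg]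
  have hU : NormedSpace.exp (t • (Complex.I • D)) ∈ unitary (H →L[ℂ] H) := by
    letI : NormedAlgebra ℚ (H →L[ℂ] H) := .restrictScalars ℚ ℂ _
    exact exp_mem_unitary_of_mem_skewAdjoint hmem
  rcases subsingleton_or_nontrivial H with h | h
  · have : Subsingleton (H →L[ℂ] H) := ⟨fun x y => ContinuousLinearMap.ext fun v =>
      Subsingleton.elim _ _⟩
    simp [Subsingleton.elim (NormedSpace.exp (t • (Complex.I • D))) 0]
  · have : Nontrivial (H →L[ℂ] H) := ⟨1, 0, one_ne_zero⟩
    exact (CStarRing.norm_of_mem_unitary hU).le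

/-- Key pointwise bound: `‖[e^{itD}, a]‖ ≤ |t| ‖[D,a]‖`. -/
private lemma aux_comm_exp_le (D a : H →L[ℂ] H) (hD : IsSelfAdjoint D) (t : ℝ) :
    ‖NormedSpace.exp (t • (Complex.I • D)) * a - a * NormedSpace.exp (t • (Complex.I • D))‖ ≤
      |t| * ‖D * a - a * D‖ := by
  have hexp : (NormedSpace.exp : (H →L[ℂ] H) → (H →L[ℂ] H)) = NormedSpace.exp :=
    rfl
  rw [hexp]
  set A : H →L[ℂ] H := Complex.I • D with hA
  set U : ℝ → (H →L[ℂ] H) := fun s => NormedSpace.exp (s • A) with hU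
  set F : ℝ → (H →L[ℂ] H) := fun s => U s * a * U (t - s) with hF
  have hUnorm : ∀ s : ℝ, ‖U s‖ ≤ 1 := by
    intro s
    have := aux_norm_exp_le D hD s
    rwa [hexp] at this
  have hderivU : ∀ s : ℝ, HasDerivAt U (U s * A) s := fun s =>
    hasDerivAt_exp_smul_const (𝕂 := ℝ) A s
  have hderivU' : ∀ s : ℝ, HasDerivAt U (A * U s) s := fun s =>
    hasDerivAt_exp_smul_const' (𝕂 := ℝ) A s
  have hderivF : ∀ s : ℝ, HasDerivAt F (U s * (A * a - a * A) * U (t - s)) s := by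
    intro s
    have h1 : HasDerivAt (fun s : ℝ => U s * a) (U s * A * a) s :=
      (hderivU s).mul_const a
    have hsub : HasDerivAt (fun x : ℝ => t - x) (-1 : ℝ) s := by
      simpa using (hasDerivAt_id s).const_sub t
    have h2 : HasDerivAt (fun s : ℝ => U (t - s)) (-(A * U (t - s))) s := by
      have := (hderivU' (t - s)).scomp s hsub
      simpa [Function.comp_def] using this
    have h3 := h1.mul h2
    refine h3.congr_deriv ?_
    noncomm_ring
  have hbound : ∀ s : ℝ, ‖U s * (A * a - a * A) * U (t - s)‖ ≤ ‖D * a - a * D‖ := by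
    intro s
    have hAcomm : ‖A * a - a * A‖ = ‖D * a - a * D‖ := by
      have : A * a - a * A = Complex.I • (D * a - a * D) := by
        simp [hA, smul_sub, smul_mul_assoc, mul_smul_comm]
      rw [this, norm_smul, Complex.norm_I, one_mul]
    calc ‖U s * (A * a - a * A) * U (t - s)‖
        ≤ ‖U s * (A * a - a * A)‖ * ‖U (t - s)‖ := norm_mul_le _ _
      _ ≤ ‖U s‖ * ‖A * a - a * A‖ * ‖U (t - s)‖ := by
          gcongr
          exact norm_mul_le _ _
      _ ≤ 1 * ‖A * a - a * A‖ * 1 := by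
          gcongr
          · exact hUnorm s
          · exact hUnorm (t - s)
      _ = ‖D * a - a * D‖ := by rw [hAcomm]; ring
  have key := convex_univ.norm_image_sub_le_of_norm_hasDerivWithin_le
    (f := F) (f' := fun s => U s * (A * a - a * A) * U (t - s))
    (fun s _ => (hderivF s).hasDerivWithinAt)
    (fun s _ => hbound s) (Set.mem_univ (0 : ℝ)) (Set.mem_univ t)
  have hF0 : F 0 = a * U t := by simp [hF, hU, exp_zero]
  have hFt : F t = U t * a := by simp [hF, hU, exp_zero]
  rw [hF0, hFt] at key
  simpa [Real.norm_eq_abs, mul_comm] using key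

end Aux

/-- Let `D, a` be bounded operators on a complex Hilbert space `H` with `D`
self-adjoint, and let `g : ℝ → ℂ` be integrable with `∫ |t|·|g t| dt < ∞`.  Let
`Φ = ∫ g t · e^{itD} dt` (a Bochner integral in `B(H)`).  Then
`‖[Φ, a]‖ ≤ (∫ |t|·|g t| dt) · ‖[D, a]‖`. -/
theorem norm_commutator_integral_exp_le
    {H : Type*} [NormedAddCommGroup H] [InnerProductSpace ℂ H] [CompleteSpace H]
    (D a : H →L[ℂ] H) (hD : IsSelfAdjoint D) (g : ℝ → ℂ)
    (hg : Integrable g) (hg' : Integrable (fun t : ℝ => |t| * ‖g t‖)) :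
    ‖(∫ t : ℝ, g t • NormedSpace.exp (((t : ℂ) * Complex.I) • D)) * a -
        a * ∫ t : ℝ, g t • NormedSpace.exp (((t : ℂ) * Complex.I) • D)‖ ≤
      (∫ t : ℝ, |t| * ‖g t‖) * ‖D * a - a * D‖ := by
  set U : ℝ → (H →L[ℂ] H) := fun t => NormedSpace.exp (t • (Complex.I • D)) with hUdef
  have hrw : ∀ t : ℝ, ((t : ℂ) * Complex.I) • D = t • (Complex.I • D) := aux_smul_eq D
  simp only [hrw]
  have hcontU : Continuous U := by
    letI : NormedAlgebra ℚ (H →L[ℂ] H) := .restrictScalars ℚ ℂ _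
    refine exp_continuous.comp ?_
    have : Continuous fun t : ℝ => ((t : ℂ)) • (Complex.I • D) :=
      Complex.continuous_ofReal.smul continuous_const
    simpa only [Complex.coe_smul] using this
  have hmeas : AEStronglyMeasurable (fun t : ℝ => g t • U t) volume :=
    hg.aestronglyMeasurable.smul hcontU.aestronglyMeasurable
  have hint : Integrable (fun t : ℝ => g t • U t) := by
    refine hg.norm.mono' hmeas (Filter.Eventually.of_forall fun t => ?_)
    rw [norm_smul]
    calc ‖g t‖ * ‖U t‖ ≤ ‖g t‖ * 1 := by
          gcongr
          exact aux_norm_exp_le D hD t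
      _ = ‖g t‖ := mul_one _
  set L : (H →L[ℂ] H) →L[ℂ] (H →L[ℂ] H) :=
    (ContinuousLinearMap.mul ℂ (H →L[ℂ] H)).flip a - ContinuousLinearMap.mul ℂ (H →L[ℂ] H) a
    with hL
  have hLapp : ∀ x : H →L[ℂ] H, L x = x * a - a * x := fun x => rfl
  have hswap : (∫ t : ℝ, g t • U t) * a - a * (∫ t : ℝ, g t • U t) =
      ∫ t : ℝ, g t • (U t * a - a * U t) := by
    rw [← hLapp, ← L.integral_comp_comm hint]
    congr 1
    ext t
    simp [hLapp, smul_sub]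
  rw [hswap]
  have hbound : ∀ t : ℝ, ‖g t • (U t * a - a * U t)‖ ≤ |t| * ‖g t‖ * ‖D * a - a * D‖ := by
    intro t
    rw [norm_smul]
    calc ‖g t‖ * ‖U t * a - a * U t‖ ≤ ‖g t‖ * (|t| * ‖D * a - a * D‖) := by
          gcongr
          exact aux_comm_exp_le D a hD t
      _ = |t| * ‖g t‖ * ‖D * a - a * D‖ := by ring
  calc ‖∫ t : ℝ, g t • (U t * a - a * U t)‖
      ≤ ∫ t : ℝ, |t| * ‖g t‖ * ‖D * a - a * D‖ :=
        norm_integral_le_of_norm_le (hg'.mul_const _)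
          (Filter.Eventually.of_forall hbound)
    _ = (∫ t : ℝ, |t| * ‖g t‖) * ‖D * a - a * D‖ := integral_mul_const _ _
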